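/- Let B be a unital complex Banach algebra and let b ∈ B. Suppose b is polynomially bounded, i.e. there exists a constant c > 0 such that ‖exp(iλb) − 1‖ ≤ c(1 + |λ|)^c for all λ ∈ ℝ. Then the spectrum of b is real: every μ ∈ spec_B(b) satisfies Im(μ) = 0. -/

import Mathlib

/-- A polynomially bounded element of a unital complex Banach algebra has real spectrum. -/
theorem stmt3 {B : Type*} [NormedRing B] [NormedAlgebra ℂ B] [CompleteSpace B]
    (b : B)
    (hpb : ∃ c : ℝ, 0 < c ∧ ∀ l : ℝ,
      ‖NormedSpace.exp (((l : ℂ) * Complex.I) • b) - 1‖ ≤ c * (1 + |l|) ^ c) :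
    ∀ μ ∈ spectrum ℂ b, μ.im = 0 := by
  obtain ⟨c, hc, hbound⟩ := hpb
  intro μ hμ
  by_contra hs
  set s := μ.im with hsdef
  set K := ‖(1 : B)‖ with hKdef
  have hK0 : 0 ≤ K := norm_nonneg _
  have hs0 : 0 < |s| := abs_pos.mpr hs
  -- Key inequality for each nonzero real l
  have key : ∀ l : ℝ, l ≠ 0 →
      Real.exp (-l * s) ≤ (c * (1 + |l|) ^ c + K) * K := by
    intro l hl
    have hu : ((l : ℂ) * Complex.I) ≠ 0 :=
      mul_ne_zero (by exact_mod_cast hl) Complex.I_ne_zero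
    have h1 : ((l : ℂ) * Complex.I) * μ ∈ spectrum ℂ (((l : ℂ) * Complex.I) • b) := by
      have := (spectrum.smul_mem_smul_iff (a := b) (s := μ)
        (r := Units.mk0 _ hu)).mpr hμ
      simpa [Units.smul_def, smul_eq_mul] using this
    have h2 := spectrum.exp_mem_exp (𝕜 := ℂ) (((l : ℂ) * Complex.I) • b) h1
    have h3 := spectrum.norm_le_norm_mul_of_mem h2
    have h4 : ‖NormedSpace.exp (((l : ℂ) * Complex.I) • b)‖ ≤ c * (1 + |l|) ^ c + K := by
      calc ‖NormedSpace.exp (((l : ℂ) * Complex.I) • b)‖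
          = ‖(NormedSpace.exp (((l : ℂ) * Complex.I) • b) - 1) + 1‖ := by rw [sub_add_cancel]
        _ ≤ ‖NormedSpace.exp (((l : ℂ) * Complex.I) • b) - 1‖ + K := norm_add_le _ _
        _ ≤ c * (1 + |l|) ^ c + K := by linarith [hbound l]
    have h5 : ‖NormedSpace.exp (((l : ℂ) * Complex.I) * μ)‖ = Real.exp (-l * s) := by
      rw [← Complex.exp_eq_exp_ℂ, Complex.norm_exp]
      congr 1
      simp [Complex.mul_re, Complex.mul_im, hsdef]
    calc Real.exp (-l * s) = ‖NormedSpace.exp (((l : ℂ) * Complex.I) * μ)‖ := h5.symm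
      _ ≤ ‖NormedSpace.exp (((l : ℂ) * Complex.I) • b)‖ * K := h3
      _ ≤ (c * (1 + |l|) ^ c + K) * K := by
          exact mul_le_mul_of_nonneg_right h4 hK0
  -- For each x > 1 take l := -((x-1)*s)/|s|
  set C := Real.exp |s| * (c * K + K * K) with hCdef
  have hbd : ∀ x : ℝ, 2 ≤ x → Real.exp (|s| * x) / x ^ c ≤ C := by
    intro x hx
    have hx1 : (1 : ℝ) < x := by linarith
    have hx0 : (0 : ℝ) < x := by linarith
    set l := -((x - 1) * s) / |s| with hldef
    have hl0 : l ≠ 0 := by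
      apply div_ne_zero _ (ne_of_gt hs0)
      simp only [neg_ne_zero]
      exact mul_ne_zero (by linarith) hs
    have habs : |l| = x - 1 := by
      rw [hldef, abs_div, abs_neg, abs_mul, abs_abs, abs_of_pos (by linarith : (0:ℝ) < x - 1)]
      field_simp
    have hls : -l * s = (x - 1) * |s| := by
      rw [hldef]
      have : s * s = |s| * |s| := (abs_mul_abs_self s).symm
      field_simp
      ring_nf
      nlinarith [abs_mul_abs_self s]
    have h := key l hl0
    rw [hls, habs] at h
    have hxc1 : (1 : ℝ) ≤ x ^ c := Real.one_le_rpow hx1.le hc.le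
    have hxc0 : (0 : ℝ) < x ^ c := lt_of_lt_of_le one_pos hxc1
    have hexp : Real.exp (|s| * x) = Real.exp |s| * Real.exp ((x - 1) * |s|) := by
      rw [← Real.exp_add]; ring_nf
    rw [hexp]
    have h1x : 1 + (x - 1) = x := by ring
    rw [h1x] at h
    calc Real.exp |s| * Real.exp ((x - 1) * |s|) / x ^ c
        ≤ Real.exp |s| * ((c * x ^ c + K) * K) / x ^ c := by gcongr
      _ = Real.exp |s| * (c * K + K * K / x ^ c) := by field_simp
      _ ≤ Real.exp |s| * (c * K + K * K) := by
          gcongr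
          exact div_le_self (by positivity) hxc1
      _ = C := rfl
  have htend := tendsto_exp_mul_div_rpow_atTop c |s| hs0
  obtain ⟨x, hx⟩ := ((htend.eventually_gt_atTop C).and (Filter.eventually_ge_atTop 2)).exists
  exact absurd (hbd x hx.2) (not_le.mpr hx.1)
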